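/- Let λ = (λ_1, ..., λ_{m+n}) be a dominant weight of GL(m|n), i.e. λ_1 ≥ ... ≥ λ_m and λ_{m+1} ≥ ... ≥ λ_{m+n} are integers. Let q ≥ 1 and α = (α_1, ..., α_{m+n}) with 0 ≤ α_i < q for each i, such that ∑α_i ≡ ∑λ_i (mod q). Then there exists a dominant weight μ with μ ⊴ λ (i.e. ∑_{i≤k} μ_i ≤ ∑_{i≤k} λ_i for all 1 ≤ k < m+n and ∑μ_i = ∑λ_i, with μ dominant) such that μ_i ≡ α_i (mod q) for every 1 ≤ i ≤ m+n. -/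

import Mathlib

/-- Let `λ` be a dominant weight of `GL(m|n)` (first `m` entries weakly
decreasing, last `n` entries weakly decreasing). Let `q ≥ 1` and `α` with `0 ≤ α i < q`
and `∑ α ≡ ∑ λ (mod q)`. Then there is a dominant weight `μ ⊴ λ` (all partial sums of
`μ` bounded by those of `λ`, equal total sums) with `μ i ≡ α i (mod q)` for all `i`. -/
theorem stmt_15 (m n : ℕ) (hm : 1 ≤ m) (hn : 1 ≤ n) (q : ℕ) (hq : 1 ≤ q)
    (lam : Fin (m + n) → ℤ)
    (hdom1 : ∀ i j : Fin (m + n), (i : ℕ) ≤ (j : ℕ) → (j : ℕ) < m → lam j ≤ lam i)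
    (hdom2 : ∀ i j : Fin (m + n), m ≤ (i : ℕ) → (i : ℕ) ≤ (j : ℕ) → lam j ≤ lam i)
    (alpha : Fin (m + n) → ℤ)
    (halpha : ∀ i, 0 ≤ alpha i ∧ alpha i < (q : ℤ))
    (hsum : (∑ i, alpha i) ≡ (∑ i, lam i) [ZMOD (q : ℤ)]) :
    ∃ mu : Fin (m + n) → ℤ,
      (∀ i j : Fin (m + n), (i : ℕ) ≤ (j : ℕ) → (j : ℕ) < m → mu j ≤ mu i) ∧
      (∀ i j : Fin (m + n), m ≤ (i : ℕ) → (i : ℕ) ≤ (j : ℕ) → mu j ≤ mu i) ∧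
      (∀ k : ℕ, 1 ≤ k → k < m + n →
        (∑ i ∈ Finset.univ.filter (fun i : Fin (m + n) => (i : ℕ) < k), mu i)
          ≤ (∑ i ∈ Finset.univ.filter (fun i : Fin (m + n) => (i : ℕ) < k), lam i)) ∧
      (∑ i, mu i) = (∑ i, lam i) ∧
      (∀ i, mu i ≡ alpha i [ZMOD (q : ℤ)]) := by
  classical
  have hq1 : (1:ℤ) ≤ (q:ℤ) := by exact_mod_cast hq
  have hq0 : (0:ℤ) ≤ (q:ℤ) := by linarith
  have hmn : m < m + n := by omega
  set m0 : Fin (m + n) := ⟨m, hmn⟩ with hm0def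
  have hm0val : (m0:ℕ) = m := by rw [hm0def]
  set i0 : Fin (m + n) := ⟨0, by omega⟩ with hi0def
  have hi0val : (i0:ℕ) = 0 := by rw [hi0def]
  set S : ℤ := ∑ i, lam i with hSdef
  set A : ℤ := ∑ i, alpha i with hAdef
  set Lm : ℤ := ∑ i, |lam i| with hLmdef
  set T : ℤ := (n:ℤ) + max (lam m0) 0 with hTdef
  set K : ℤ := 3*A + Lm + ((m:ℤ) + (n:ℤ) + 1) * ((q:ℤ) * T) + |S| with hKdef
  set f : Fin (m + n) → ℤ := fun i =>
    if (i:ℕ) < m then alpha i - (q:ℤ) * (K + ((i:ℕ):ℤ))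
    else alpha i + (q:ℤ) * (T + (m:ℤ) - ((i:ℕ):ℤ)) with hfdef
  set mu : Fin (m + n) → ℤ := fun i =>
    if (i:ℕ) = m then S - (∑ j ∈ Finset.univ.erase m0, f j) else f i with hmudef
  have hf_lt : ∀ i : Fin (m + n), (i:ℕ) < m →
      f i = alpha i - (q:ℤ) * (K + ((i:ℕ):ℤ)) := by
    intro i h; simp only [hfdef]; rw [if_pos h]
  have hf_ge : ∀ i : Fin (m + n), ¬ (i:ℕ) < m →
      f i = alpha i + (q:ℤ) * (T + (m:ℤ) - ((i:ℕ):ℤ)) := by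
    intro i h; simp only [hfdef]; rw [if_neg h]
  have hmu_ne : ∀ i : Fin (m + n), (i:ℕ) ≠ m → mu i = f i := by
    intro i h; simp only [hmudef]; rw [if_neg h]
  have hmu_at : mu m0 = S - (∑ j ∈ Finset.univ.erase m0, f j) := by
    simp [hmudef, hm0val]
  clear_value mu f K T Lm A S
  clear hfdef hmudef
  have hA0 : 0 ≤ A := by
    rw [hAdef]; exact Finset.sum_nonneg (fun i _ => (halpha i).1)
  have hLm0 : 0 ≤ Lm := by
    rw [hLmdef]; exact Finset.sum_nonneg (fun i _ => abs_nonneg _)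
  have hn1 : (1:ℤ) ≤ (n:ℤ) := by exact_mod_cast hn
  have hmaxr := le_max_right (lam m0) (0:ℤ)
  have hmaxl := le_max_left (lam m0) (0:ℤ)
  have hT1 : 1 ≤ T := by rw [hTdef]; linarith
  have hqT0 : 0 ≤ (q:ℤ) * T := mul_nonneg hq0 (by linarith)
  have hK0 : 0 ≤ K := by
    have h2 : (0:ℤ) ≤ ((m:ℤ) + (n:ℤ) + 1) * ((q:ℤ) * T) :=
      mul_nonneg (by positivity) hqT0
    have h3 : (0:ℤ) ≤ |S| := abs_nonneg _
    rw [hKdef]; linarith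
  have hqK : K ≤ (q:ℤ) * K := le_mul_of_one_le_left hK0 hq1
  have hqK0 : 0 ≤ (q:ℤ) * K := mul_nonneg hq0 hK0
  -- total sum
  have herase_eq : ∑ j ∈ Finset.univ.erase m0, mu j = ∑ j ∈ Finset.univ.erase m0, f j := by
    refine Finset.sum_congr rfl (fun j hj => hmu_ne j ?_)
    intro h
    exact (Finset.mem_erase.mp hj).1 (Fin.ext (h.trans hm0val.symm))
  have hsum_mu : ∑ i, mu i = S := by
    have h := Finset.add_sum_erase Finset.univ mu (Finset.mem_univ m0)
    rw [← h, hmu_at, herase_eq]; ring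
  -- divisibility facts
  have hdvd_f : ∀ j : Fin (m + n), (q:ℤ) ∣ f j - alpha j := by
    intro j
    by_cases h : (j:ℕ) < m
    · have he : f j - alpha j = -((q:ℤ) * (K + ((j:ℕ):ℤ))) := by rw [hf_lt j h]; ring
      rw [he]; exact dvd_neg.mpr (dvd_mul_right _ _)
    · have he : f j - alpha j = (q:ℤ) * (T + (m:ℤ) - ((j:ℕ):ℤ)) := by rw [hf_ge j h]; ring
      rw [he]; exact dvd_mul_right _ _
  have hdvdS : (q:ℤ) ∣ S - A := hsum.dvd
  have halA : ∀ i : Fin (m + n), alpha i ≤ A := by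
    intro i
    rw [hAdef]
    exact Finset.single_le_sum (fun j _ => (halpha j).1) (Finset.mem_univ i)
  have hKge : 2*A + ((m:ℤ) + (n:ℤ) + 1) * ((q:ℤ)*T) - S ≤ (q:ℤ)*K := by
    have habs : -|S| ≤ S := neg_abs_le S
    linarith [hKdef, hqK, hA0, hLm0]
  -- lower bound for mu m0
  have hmu_m0_lb : (q:ℤ) * T ≤ mu m0 := by
    have hi0ne : i0 ≠ m0 := by
      intro h
      have : (i0:ℕ) = (m0:ℕ) := congrArg Fin.val h
      omega
    have hi0mem : i0 ∈ Finset.univ.erase m0 :=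
      Finset.mem_erase.mpr ⟨hi0ne, Finset.mem_univ _⟩
    have hsplit := Finset.add_sum_erase (Finset.univ.erase m0) f hi0mem
    have hfi0 : f i0 = alpha i0 - (q:ℤ) * K := by
      rw [hf_lt i0 (by omega), hi0val]; norm_num
    set s2 := (Finset.univ.erase m0).erase i0 with hs2def
    have hfub : ∀ j : Fin (m + n), f j ≤ alpha j + (q:ℤ) * T := by
      intro j
      by_cases h : (j:ℕ) < m
      · rw [hf_lt j h]
        have : 0 ≤ (q:ℤ) * (K + ((j:ℕ):ℤ)) := mul_nonneg hq0 (by positivity)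
        linarith
      · rw [hf_ge j h]
        have hjm : (m:ℤ) ≤ ((j:ℕ):ℤ) := by exact_mod_cast Nat.le_of_not_lt h
        have : (q:ℤ) * (T + (m:ℤ) - ((j:ℕ):ℤ)) ≤ (q:ℤ) * T :=
          mul_le_mul_of_nonneg_left (by linarith) hq0
        linarith
    have hsum2 : ∑ j ∈ s2, f j ≤ A + ((m:ℤ) + (n:ℤ)) * ((q:ℤ) * T) := by
      have h1 : ∑ j ∈ s2, f j ≤ ∑ j ∈ s2, (alpha j + (q:ℤ) * T) :=
        Finset.sum_le_sum (fun j _ => hfub j)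
      have h2 : ∑ j ∈ s2, (alpha j + (q:ℤ) * T)
          = (∑ j ∈ s2, alpha j) + (s2.card : ℤ) * ((q:ℤ) * T) := by
        rw [Finset.sum_add_distrib, Finset.sum_const, nsmul_eq_mul]
      have h3 : ∑ j ∈ s2, alpha j ≤ A := by
        rw [hAdef]
        exact Finset.sum_le_sum_of_subset_of_nonneg (Finset.subset_univ _)
          (fun i _ _ => (halpha i).1)
      have h4 : (s2.card : ℤ) ≤ (m:ℤ) + (n:ℤ) := by
        have hc1 : s2.card ≤ m + n := by simpa using Finset.card_le_univ s2
        exact_mod_cast hc1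
      have h5 : (s2.card : ℤ) * ((q:ℤ) * T) ≤ ((m:ℤ) + (n:ℤ)) * ((q:ℤ) * T) :=
        mul_le_mul_of_nonneg_right h4 hqT0
      linarith
    have hfull : ∑ j ∈ Finset.univ.erase m0, f j
        ≤ 2*A - (q:ℤ)*K + ((m:ℤ) + (n:ℤ)) * ((q:ℤ) * T) := by
      rw [← hsplit, hfi0]
      linarith [halA i0]
    rw [hmu_at]
    linarith [hKge, hfull]
  refine ⟨mu, ?_, ?_, ?_, ?_, ?_⟩
  · -- first block decreasing
    intro i j hij hjm
    rcases eq_or_lt_of_le hij with h | h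
    · rw [Fin.ext h]
    · have him : (i:ℕ) < m := lt_of_le_of_lt hij hjm
      rw [hmu_ne i (by omega), hmu_ne j (by omega), hf_lt i him, hf_lt j hjm]
      have hcast : ((i:ℕ):ℤ) + 1 ≤ ((j:ℕ):ℤ) := by exact_mod_cast h
      have hmul : (q:ℤ) * 1 ≤ (q:ℤ) * (((j:ℕ):ℤ) - ((i:ℕ):ℤ)) :=
        mul_le_mul_of_nonneg_left (by linarith) hq0
      have h1 := (halpha i).1
      have h2 := (halpha j).2
      linarith
  · -- second block decreasing
    intro i j hmi hij
    rcases eq_or_lt_of_le hij with h | h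
    · rw [Fin.ext h]
    · by_cases him : (i:ℕ) = m
      · have hieq : i = m0 := Fin.ext (him.trans hm0val.symm)
        have hjm : m < (j:ℕ) := by omega
        rw [hieq, hmu_ne j (by omega), hf_ge j (by omega)]
        have hcast : (m:ℤ) + 1 ≤ ((j:ℕ):ℤ) := by exact_mod_cast hjm
        have hmul : (q:ℤ) * ((m:ℤ) + 1) ≤ (q:ℤ) * ((j:ℕ):ℤ) :=
          mul_le_mul_of_nonneg_left hcast hq0
        have h2 := (halpha j).2
        linarith [hmu_m0_lb]
      · have him' : m < (i:ℕ) := by omega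
        rw [hmu_ne i (by omega), hmu_ne j (by omega),
          hf_ge i (by omega), hf_ge j (by omega)]
        have hcast : ((i:ℕ):ℤ) + 1 ≤ ((j:ℕ):ℤ) := by exact_mod_cast h
        have hmul : (q:ℤ) * 1 ≤ (q:ℤ) * (((j:ℕ):ℤ) - ((i:ℕ):ℤ)) :=
          mul_le_mul_of_nonneg_left (by linarith) hq0
        have h1 := (halpha i).1
        have h2 := (halpha j).2
        linarith
  · -- partial sums
    intro k hk1 hk2
    by_cases hkm : k ≤ m
    · set s := Finset.univ.filter (fun i : Fin (m + n) => (i:ℕ) < k) with hsdef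
      have hi0s : i0 ∈ s := by
        rw [hsdef, Finset.mem_filter]
        exact ⟨Finset.mem_univ _, by omega⟩
      have hsplit := Finset.add_sum_erase s mu hi0s
      have hmui0 : mu i0 = alpha i0 - (q:ℤ) * K := by
        rw [hmu_ne i0 (by omega), hf_lt i0 (by omega), hi0val]; norm_num
      have hrest : ∑ j ∈ s.erase i0, mu j ≤ A := by
        have h1 : ∀ j ∈ s.erase i0, mu j ≤ alpha j := by
          intro j hj
          have hjs := Finset.mem_of_mem_erase hj
          have hjk : (j:ℕ) < k := by
            have := (Finset.mem_filter.mp (by rwa [hsdef] at hjs)).2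
            exact this
          have hjm : (j:ℕ) < m := by omega
          rw [hmu_ne j (by omega), hf_lt j hjm]
          have : 0 ≤ (q:ℤ) * (K + ((j:ℕ):ℤ)) := mul_nonneg hq0 (by positivity)
          linarith
        calc ∑ j ∈ s.erase i0, mu j ≤ ∑ j ∈ s.erase i0, alpha j :=
              Finset.sum_le_sum h1
          _ ≤ A := by
              rw [hAdef]
              exact Finset.sum_le_sum_of_subset_of_nonneg (Finset.subset_univ _)
                (fun i _ _ => (halpha i).1)
      have hmusum_ub : ∑ i ∈ s, mu i ≤ 2*A - (q:ℤ)*K := by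
        rw [← hsplit, hmui0]
        linarith [halA i0]
      have hlam_lb : -Lm ≤ ∑ i ∈ s, lam i := by
        have h1 : ∑ i ∈ s, |lam i| ≤ Lm := by
          rw [hLmdef]
          exact Finset.sum_le_sum_of_subset_of_nonneg (Finset.subset_univ _)
            (fun i _ _ => abs_nonneg _)
        have h2 : -(∑ i ∈ s, |lam i|) ≤ ∑ i ∈ s, lam i := by
          rw [← Finset.sum_neg_distrib]
          exact Finset.sum_le_sum (fun i _ => neg_abs_le _)
        linarith
      have hKbig : 2*A + Lm ≤ (q:ℤ)*K := by
        have h1 : (0:ℤ) ≤ ((m:ℤ) + (n:ℤ) + 1) * ((q:ℤ) * T) :=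
          mul_nonneg (by positivity) hqT0
        have h3 : (0:ℤ) ≤ |S| := abs_nonneg _
        linarith [hKdef, hqK]
      linarith
    · -- k > m
      have key : ∀ i : Fin (m + n), ¬ ((i:ℕ) < k) → lam i ≤ mu i := by
        intro i hik
        have him : m < (i:ℕ) := by omega
        rw [hmu_ne i (by omega), hf_ge i (by omega)]
        have h1 : lam i ≤ lam m0 := hdom2 m0 i (by omega) (by omega)
        have hilt : ((i:ℕ):ℤ) ≤ (m:ℤ) + (n:ℤ) - 1 := by
          have h := i.isLt
          have h' : ((i:ℕ):ℤ) < (m:ℤ) + (n:ℤ) := by exact_mod_cast h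
          linarith
        have hTpos : 0 ≤ T + (m:ℤ) - ((i:ℕ):ℤ) := by
          linarith [hTdef]
        have h3 : T + (m:ℤ) - ((i:ℕ):ℤ) ≤ (q:ℤ) * (T + (m:ℤ) - ((i:ℕ):ℤ)) :=
          le_mul_of_one_le_left hTpos hq1
        have h4 : lam m0 ≤ T + (m:ℤ) - ((i:ℕ):ℤ) := by
          linarith [hTdef]
        have h5 := (halpha i).1
        linarith
      have hsplit : ∀ g : Fin (m + n) → ℤ,
          ∑ i ∈ Finset.univ.filter (fun i : Fin (m + n) => (i:ℕ) < k), g i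
          = (∑ i, g i) - ∑ i ∈ Finset.univ.filter (fun i : Fin (m + n) => ¬ (i:ℕ) < k), g i := by
        intro g
        have := Finset.sum_filter_add_sum_filter_not Finset.univ
          (fun i : Fin (m + n) => (i:ℕ) < k) g
        linarith
      rw [hsplit mu, hsplit lam, hsum_mu, ← hSdef]
      have hmono : ∑ i ∈ Finset.univ.filter (fun i : Fin (m + n) => ¬ (i:ℕ) < k), lam i
          ≤ ∑ i ∈ Finset.univ.filter (fun i : Fin (m + n) => ¬ (i:ℕ) < k), mu i := by
        refine Finset.sum_le_sum (fun i hi => key i ?_)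
        have := (Finset.mem_filter.mp hi).2
        exact this
      linarith
  · exact hsum_mu
  · -- residues
    intro i
    rw [Int.modEq_iff_dvd]
    by_cases h : (i:ℕ) = m
    · have hieq : i = m0 := Fin.ext (h.trans hm0val.symm)
      rw [hieq, hmu_at]
      have hAsplit : alpha m0 + ∑ j ∈ Finset.univ.erase m0, alpha j = A := by
        rw [hAdef]
        exact Finset.add_sum_erase Finset.univ alpha (Finset.mem_univ m0)
      have hdvdsum : (q:ℤ) ∣ ∑ j ∈ Finset.univ.erase m0, (f j - alpha j) :=
        Finset.dvd_sum (fun j _ => hdvd_f j)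
      have heq : alpha m0 - (S - ∑ j ∈ Finset.univ.erase m0, f j)
          = (∑ j ∈ Finset.univ.erase m0, (f j - alpha j)) - (S - A) := by
        rw [Finset.sum_sub_distrib]
        linarith [hAsplit]
      rw [heq]
      exact dvd_sub hdvdsum hdvdS
    · rw [hmu_ne i h]
      have hd := hdvd_f i
      have heq : alpha i - f i = -(f i - alpha i) := by ring
      rw [heq]
      exact dvd_neg.mpr hd
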